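/- For all g, h in SL₂(ℝ) and z in the upper half-plane ℍ, the quantity ω(g,h) := (1/(2πi))(Log j(g, h·z) + Log j(h,z) − Log j(gh,z)) is independent of z, where Log is the principal branch of the logarithm and j(g,z) = c_g z + d_g. -/

import Mathlib

open Complex

/-- The automorphy factor `j(g,z) = cz + d` for `g = (a b; c d) ∈ SL₂(ℝ)`. -/
noncomputable def jf (g : Matrix.SpecialLinearGroup (Fin 2) ℝ) (z : ℂ) : ℂ :=
  (g.1 1 0 : ℝ) * z + (g.1 1 1 : ℝ)

/-- The Möbius action `g·z = (az+b)/(cz+d)`. -/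
noncomputable def act (g : Matrix.SpecialLinearGroup (Fin 2) ℝ) (z : ℂ) : ℂ :=
  ((g.1 0 0 : ℝ) * z + (g.1 0 1 : ℝ)) / jf g z

/-- `ω(g,h) = (1/(2πi))(Log j(g,h·z) + Log j(h,z) − Log j(gh,z))`. -/
noncomputable def om (g h : Matrix.SpecialLinearGroup (Fin 2) ℝ) (z : ℂ) : ℂ :=
  (1 / (2 * Real.pi * I)) *
    (Complex.log (jf g (act h z)) + Complex.log (jf h z) - Complex.log (jf (g * h) z))

lemma jf_im (g : Matrix.SpecialLinearGroup (Fin 2) ℝ) (z : ℂ) :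
    (jf g z).im = (g.1 1 0) * z.im := by
  simp [jf]

lemma jf_ne (g : Matrix.SpecialLinearGroup (Fin 2) ℝ) {z : ℂ} (hz : 0 < z.im) :
    jf g z ≠ 0 := by
  by_cases hc : (g.1 1 0 : ℝ) = 0
  · have hdet := g.2
    rw [Matrix.det_fin_two] at hdet
    have hd : (g.1 1 1 : ℝ) ≠ 0 := by
      intro h; rw [h, hc] at hdet; simp at hdet
    intro h
    apply hd
    have := congrArg Complex.re h
    simpa [jf, hc] using this
  · intro h
    have := congrArg Complex.im h
    rw [jf_im] at this
    simp only [Complex.zero_im] at this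
    rcases mul_eq_zero.1 this with h1 | h1
    · exact hc h1
    · exact hz.ne' h1

lemma act_im (g : Matrix.SpecialLinearGroup (Fin 2) ℝ) {z : ℂ} (hz : 0 < z.im) :
    (act g z).im = z.im / Complex.normSq (jf g z) := by
  have hdet := g.2
  rw [Matrix.det_fin_two] at hdet
  rw [act, Complex.div_im]
  rw [div_sub_div_same]
  congr 1
  simp only [jf, Complex.add_im, Complex.add_re, Complex.mul_im, Complex.mul_re,
    Complex.ofReal_re, Complex.ofReal_im]
  ring_nf
  nlinarith [hdet]

lemma act_im_pos (g : Matrix.SpecialLinearGroup (Fin 2) ℝ) {z : ℂ} (hz : 0 < z.im) :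
    0 < (act g z).im := by
  rw [act_im g hz]
  exact div_pos hz (Complex.normSq_pos.2 (jf_ne g hz))

lemma jf_cocycle (g h : Matrix.SpecialLinearGroup (Fin 2) ℝ) {z : ℂ} (hz : 0 < z.im) :
    jf g (act h z) * jf h z = jf (g * h) z := by
  have hne := jf_ne h hz
  simp only [jf, act, Matrix.SpecialLinearGroup.coe_mul, Matrix.mul_apply,
    Fin.sum_univ_two]
  push_cast
  rw [jf] at hne
  rw [add_mul, mul_assoc, div_mul_cancel₀ _ hne]
  ring

lemma cont_log_jf (k : Matrix.SpecialLinearGroup (Fin 2) ℝ) {F : ℂ → ℂ}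
    (hF : ContinuousOn F {z : ℂ | 0 < z.im})
    (him : ∀ z ∈ {z : ℂ | 0 < z.im}, 0 < (F z).im) :
    ContinuousOn (fun z => Complex.log (jf k (F z))) {z : ℂ | 0 < z.im} := by
  by_cases hc : (k.1 1 0 : ℝ) = 0
  · have heq : ∀ z : ℂ, jf k (F z) = ((k.1 1 1 : ℝ) : ℂ) := by
      intro z; simp [jf, hc]
    simp only [heq]
    exact continuousOn_const
  · have hjf : ContinuousOn (fun z => jf k (F z)) {z : ℂ | 0 < z.im} := by
      simp only [jf]
      exact (continuousOn_const.mul hF).add continuousOn_const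
    intro z hzS
    refine ContinuousWithinAt.clog (hjf z hzS) ?_
    rw [Complex.mem_slitPlane_iff]
    right
    rw [jf_im]
    exact mul_ne_zero hc (him z hzS).ne'

theorem om_independent_of_z (g h : Matrix.SpecialLinearGroup (Fin 2) ℝ)
    (z w : ℂ) (hz : 0 < z.im) (hw : 0 < w.im) : om g h z = om g h w := by
  have hpre : IsPreconnected {z : ℂ | 0 < z.im} := (convex_halfSpace_im_gt 0).isPreconnected
  set f : ℂ → ℂ := fun z =>
    Complex.log (jf g (act h z)) + Complex.log (jf h z) - Complex.log (jf (g * h) z) with hf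
  have hid : ∀ z ∈ {z : ℂ | 0 < z.im}, 0 < (id z : ℂ).im := fun z hz => hz
  have hact : ContinuousOn (act h) {z : ℂ | 0 < z.im} := by
    show ContinuousOn (fun z : ℂ => (((h.1 0 0 : ℝ) : ℂ) * z + ((h.1 0 1 : ℝ) : ℂ)) / jf h z)
      {z : ℂ | 0 < z.im}
    refine ContinuousOn.div ((continuousOn_const.mul continuousOn_id).add continuousOn_const)
      ?_ (fun z hzS => jf_ne h hzS)
    show ContinuousOn (fun z : ℂ => (((h.1 1 0 : ℝ) : ℂ) * z + ((h.1 1 1 : ℝ) : ℂ)))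
      {z : ℂ | 0 < z.im}
    exact (continuousOn_const.mul continuousOn_id).add continuousOn_const
  have hcont : ContinuousOn f {z : ℂ | 0 < z.im} := by
    refine ContinuousOn.sub (ContinuousOn.add ?_ ?_) ?_
    · exact cont_log_jf g hact (fun z hzS => act_im_pos h hzS)
    · exact cont_log_jf h continuousOn_id hid
    · exact cont_log_jf (g * h) continuousOn_id hid
  haveI hdisc : DiscreteTopology ((AddSubgroup.zmultiples ((2 * Real.pi * I : ℂ))) : Set ℂ) :=
    inferInstanceAs (DiscreteTopology (AddSubgroup.zmultiples ((2 * Real.pi * I : ℂ))))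
  have hmaps : Set.MapsTo f {z : ℂ | 0 < z.im}
      ((AddSubgroup.zmultiples ((2 * Real.pi * I : ℂ))) : Set ℂ) := by
    intro z hzS
    have h1 : Complex.exp (f z) = 1 := by
      rw [hf]
      rw [Complex.exp_sub, Complex.exp_add, Complex.exp_log (jf_ne g (act_im_pos h hzS)),
        Complex.exp_log (jf_ne h hzS), Complex.exp_log (jf_ne (g * h) hzS),
        jf_cocycle g h hzS, div_self (jf_ne (g * h) hzS)]
    obtain ⟨n, hn⟩ := Complex.exp_eq_one_iff.1 h1
    refine AddSubgroup.mem_zmultiples_iff.2 ⟨n, ?_⟩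
    rw [zsmul_eq_mul, ← hn]
  have key : f z = f w := hpre.constant_of_mapsTo (isDiscrete_iff_discreteTopology.mpr hdisc) hcont hmaps hz hw
  simp only [om, hf] at key ⊢
  rw [key]
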